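/- Let q = 1/1.409. There do not exist 11 points X₁, …, X₁₁ in the plane with pairwise distances at least q such that all satisfy 1 ≤ |Xᵢ| ≤ 1.29 and at least 9 of them satisfy |Xᵢ| ≤ 1.21. -/

import Mathlib

open Finset
open Fin.NatCast

lemma red_bound (a b : ℝ) (h1a : 1 ≤ a) (haR : a ≤ 1.21) (h1b : 1 ≤ b) (hbR : b ≤ 1.21) :
    a^2 + b^2 - (1/1.409)^2 ≤ 2*(a*b)*(1 - 0.5865^2/2) := by
  nlinarith [mul_nonneg (sub_nonneg.2 haR) (sub_nonneg.2 hbR),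
    mul_nonneg (sub_nonneg.2 h1a) (sub_nonneg.2 h1b),
    mul_nonneg (sub_nonneg.2 haR) (sub_nonneg.2 h1b),
    mul_nonneg (sub_nonneg.2 h1a) (sub_nonneg.2 hbR), sq_nonneg (a-b)]

lemma blue_bound (a b : ℝ) (h1a : 1 ≤ a) (haR : a ≤ 1.29) (h1b : 1 ≤ b) (hbR : b ≤ 1.29) :
    a^2 + b^2 - (1/1.409)^2 ≤ 2*(a*b)*(1 - 0.5501^2/2) := by
  nlinarith [mul_nonneg (sub_nonneg.2 haR) (sub_nonneg.2 hbR),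
    mul_nonneg (sub_nonneg.2 h1a) (sub_nonneg.2 h1b),
    mul_nonneg (sub_nonneg.2 haR) (sub_nonneg.2 h1b),
    mul_nonneg (sub_nonneg.2 h1a) (sub_nonneg.2 hbR), sq_nonneg (a-b)]

lemma cos_bound {z w : ℂ} {K : ℝ}
    (hz1 : 1 ≤ ‖z‖) (hw1 : 1 ≤ ‖w‖)
    (hd : (1/1.409 : ℝ) ≤ dist z w)
    (hK : (‖z‖)^2 + (‖w‖)^2 - (1/1.409:ℝ)^2
        ≤ 2*((‖z‖)*(‖w‖))*K) :
    Real.cos (Complex.arg z - Complex.arg w) ≤ K := by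
  have hz0 : z ≠ 0 := by
    intro h; rw [h] at hz1; simp at hz1; linarith
  have hw0 : w ≠ 0 := by
    intro h; rw [h] at hw1; simp at hw1; linarith
  set a := ‖z‖ with ha
  set b := ‖w‖ with hb
  have ha0 : 0 < a := lt_of_lt_of_le one_pos hz1
  have hb0 : 0 < b := lt_of_lt_of_le one_pos hw1
  have ha2 : z.re^2 + z.im^2 = a^2 := by
    rw [ha, Complex.sq_norm, Complex.normSq_apply]; ring
  have hb2 : w.re^2 + w.im^2 = b^2 := by
    rw [hb, Complex.sq_norm, Complex.normSq_apply]; ring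
  have hd2 : (dist z w)^2 = (z.re - w.re)^2 + (z.im - w.im)^2 := by
    rw [Complex.dist_eq, Complex.sq_norm, Complex.normSq_apply]
    simp [Complex.sub_re, Complex.sub_im]; ring
  have hq2 : ((1:ℝ)/1.409)^2 ≤ (dist z w)^2 := by
    have : (0:ℝ) ≤ 1/1.409 := by norm_num
    exact pow_le_pow_left₀ this hd 2
  have hcos : Real.cos (Complex.arg z - Complex.arg w)
      = (z.re * w.re + z.im * w.im) / (a * b) := by
    rw [Real.cos_sub, Complex.cos_arg hz0, Complex.sin_arg, Complex.cos_arg hw0,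
      Complex.sin_arg]
    field_simp
    rw [ha, hb]; ring
  rw [hcos, div_le_iff₀ (by positivity)]
  nlinarith [hq2, hd2, ha2, hb2, hK]

lemma gap_lemma {t φ : ℝ} (hφπ : φ ≤ Real.pi) (ht0 : 0 ≤ t) (ht2 : t < 2*Real.pi)
    (h : Real.cos t ≤ Real.cos φ) : φ ≤ t ∧ t ≤ 2*Real.pi - φ := by
  rcases le_or_gt t Real.pi with htπ | htπ
  · refine ⟨?_, by linarith⟩
    by_contra hc
    push_neg at hc
    have := Real.cos_lt_cos_of_nonneg_of_le_pi ht0 hφπ hc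
    linarith
  · have hc : Real.cos (2*Real.pi - t) = Real.cos t := Real.cos_two_pi_sub t
    have h1 : φ ≤ 2*Real.pi - t := by
      by_contra hc2
      push_neg at hc2
      have := Real.cos_lt_cos_of_nonneg_of_le_pi (by linarith) hφπ hc2
      linarith
    exact ⟨by linarith, by linarith⟩

lemma cardA (σ : Equiv.Perm (Fin 11)) (S : Finset (Fin 11)) :
    ((Finset.range 11).filter (fun (k : ℕ) => σ ((k : Fin 11)) ∉ S)).card = 11 - S.card := by
  have h : ((Finset.range 11).filter (fun (k : ℕ) => σ ((k : Fin 11)) ∉ S)).card = Sᶜ.card := by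
    apply Finset.card_nbij' (fun (k : ℕ) => σ ((k : Fin 11))) (fun i => (σ.symm i).val)
    · intro k hk
      simp only [Finset.mem_coe, mem_filter, mem_range] at hk
      simpa [Finset.mem_compl] using hk.2
    · intro i hi
      simp only [Finset.mem_coe, Finset.mem_compl] at hi
      simp only [Finset.mem_coe, mem_filter, mem_range]
      exact ⟨(σ.symm i).isLt, by rw [Fin.cast_val_eq_self]; simpa using hi⟩
    · intro k hk
      simp only [Finset.mem_coe, mem_filter, mem_range] at hk
      dsimp only
      rw [Equiv.symm_apply_apply, Fin.val_natCast]
      omega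
    · intro i _
      dsimp only
      rw [Fin.cast_val_eq_self, Equiv.apply_symm_apply]
  rw [h, Finset.card_compl]
  simp

lemma cardB (σ : Equiv.Perm (Fin 11)) (S : Finset (Fin 11)) :
    ((Finset.range 11).filter (fun (k : ℕ) => σ (((k+1 : ℕ) : Fin 11)) ∉ S)).card
      = 11 - S.card := by
  have key : ∀ i : Fin 11, ((((σ.symm i).val + 10) % 11 + 1 : ℕ) : Fin 11) = σ.symm i := by
    intro i
    apply Fin.ext
    rw [Fin.val_natCast]
    have := (σ.symm i).isLt
    omega
  have h : ((Finset.range 11).filter (fun (k : ℕ) => σ (((k+1:ℕ) : Fin 11)) ∉ S)).card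
      = Sᶜ.card := by
    apply Finset.card_nbij' (fun (k : ℕ) => σ (((k+1:ℕ) : Fin 11)))
      (fun i => ((σ.symm i).val + 10) % 11)
    · intro k hk
      simp only [Finset.mem_coe, mem_filter, mem_range] at hk
      simpa [Finset.mem_compl] using hk.2
    · intro i hi
      simp only [Finset.mem_coe, Finset.mem_compl] at hi
      simp only [Finset.mem_coe, mem_filter, mem_range]
      refine ⟨by omega, ?_⟩
      rw [key i, Equiv.apply_symm_apply]
      simpa using hi
    · intro k hk
      simp only [Finset.mem_coe, mem_filter, mem_range] at hk
      dsimp only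
      rw [Equiv.symm_apply_apply, Fin.val_natCast]
      omega
    · intro i _
      dsimp only
      rw [key i, Equiv.apply_symm_apply]
  rw [h, Finset.card_compl]
  simp

/-- Impossible: 11 points with pairwise distances ≥ q = 1/1.409, all in
1 ≤ ρ ≤ 1.29, at least 9 of them in 1 ≤ ρ ≤ 1.21. -/
theorem stmt_12 :
    ¬ ∃ X : Fin 11 → EuclideanSpace ℝ (Fin 2),
      Function.Injective X ∧
      (∀ i, (1 : ℝ) ≤ ‖X i‖ ∧ ‖X i‖ ≤ 1.29) ∧
      (∃ S : Finset (Fin 11), 9 ≤ S.card ∧ ∀ i ∈ S, ‖X i‖ ≤ 1.21) ∧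
      (∀ i j, i ≠ j → (1 / 1.409 : ℝ) ≤ dist (X i) (X j)) := by
  rintro ⟨X, hinj, hball, ⟨S, hS9, hSmem⟩, hdist⟩
  set e := Complex.orthonormalBasisOneI.repr with he
  set z : Fin 11 → ℂ := fun i => e.symm (X i) with hz
  have habs : ∀ i, ‖z i‖ = ‖X i‖ := by
    intro i
    exact e.symm.norm_map (X i)
  have hdistz : ∀ i j, dist (z i) (z j) = dist (X i) (X j) := by
    intro i j
    exact e.symm.dist_map (X i) (X j)
  set θ : Fin 11 → ℝ := fun i => Complex.arg (z i) with hθ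
  set σ := Tuple.sort θ with hσ
  have hmono : Monotone (θ ∘ σ) := Tuple.monotone_sort θ
  set W : ℕ → ℝ :=
    fun n => if σ ((n : Fin 11)) ∈ S ∧ σ (((n+1 : ℕ)) : Fin 11) ∈ S then 0.5865 else 0.5501
    with hW
  have hθub : ∀ i, θ i ≤ Real.pi := fun i => Complex.arg_le_pi _
  have hθlb : ∀ i, -Real.pi < θ i := fun i => Complex.neg_pi_lt_arg _
  have hpil : (3.141592 : ℝ) < Real.pi := Real.pi_gt_d6
  have hpiu : Real.pi < 3.141593 := Real.pi_lt_d6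
  -- per-edge cosine bound
  have hedge : ∀ k : ℕ, k ≤ 10 →
      Real.cos (θ (σ (((k+1:ℕ)) : Fin 11)) - θ (σ ((k : Fin 11)))) ≤ 1 - (W k)^2/2 := by
    intro k hk
    set i := σ (((k+1:ℕ)) : Fin 11) with hi
    set j := σ ((k : Fin 11)) with hj
    have hij : i ≠ j := by
      intro h
      have hcast := σ.injective h
      have hval := congrArg Fin.val hcast
      rw [Fin.val_natCast, Fin.val_natCast] at hval
      omega
    have hd : (1/1.409 : ℝ) ≤ dist (z i) (z j) := by
      rw [hdistz]
      exact hdist i j (fun h => hij (by rw [h]))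
    have h1i : 1 ≤ ‖z i‖ := by rw [habs]; exact (hball i).1
    have h1j : 1 ≤ ‖z j‖ := by rw [habs]; exact (hball j).1
    by_cases hmem : σ ((k : Fin 11)) ∈ S ∧ σ (((k+1:ℕ)) : Fin 11) ∈ S
    · have hiR : ‖z i‖ ≤ 1.21 := by rw [habs]; exact hSmem _ hmem.2
      have hjR : ‖z j‖ ≤ 1.21 := by rw [habs]; exact hSmem _ hmem.1
      have hb := cos_bound h1i h1j hd (red_bound _ _ h1i hiR h1j hjR)
      simp only [hW, if_pos hmem]
      convert hb using 2
    · have hiR : ‖z i‖ ≤ 1.29 := by rw [habs]; exact (hball i).2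
      have hjR : ‖z j‖ ≤ 1.29 := by rw [habs]; exact (hball j).2
      have hb := cos_bound h1i h1j hd (blue_bound _ _ h1i hiR h1j hjR)
      simp only [hW, if_neg hmem]
      convert hb using 2
  have hedge' : ∀ k : ℕ, k ≤ 10 →
      Real.cos (θ (σ (((k+1:ℕ)) : Fin 11)) - θ (σ ((k : Fin 11)))) ≤ Real.cos (W k) := by
    intro k hk
    exact (hedge k hk).trans (Real.one_sub_sq_div_two_le_cos)
  have hWrange : ∀ k : ℕ, (0.5501 : ℝ) ≤ W k ∧ W k ≤ Real.pi := by
    intro k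
    rw [hW]
    dsimp only
    split <;> constructor <;> norm_num <;> linarith
  -- gaps
  have hgap : ∀ k : ℕ, k < 10 →
      W k ≤ θ (σ (((k+1:ℕ)) : Fin 11)) - θ (σ ((k : Fin 11))) := by
    intro k hk
    have hle : ((k : Fin 11)) ≤ (((k+1:ℕ)) : Fin 11) := by
      rw [Fin.le_def, Fin.val_natCast, Fin.val_natCast]
      omega
    have ht0 : 0 ≤ θ (σ (((k+1:ℕ)) : Fin 11)) - θ (σ ((k : Fin 11))) :=
      sub_nonneg.2 (hmono hle)
    have ht2 : θ (σ (((k+1:ℕ)) : Fin 11)) - θ (σ ((k : Fin 11))) < 2*Real.pi := by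
      have := hθub (σ (((k+1:ℕ)) : Fin 11))
      have := hθlb (σ ((k : Fin 11)))
      linarith
    exact (gap_lemma (hWrange k).2 ht0 ht2 (hedge' k hk.le)).1
  -- wraparound
  have hwrap : W 10 ≤ 2*Real.pi - (θ (σ (((10:ℕ)) : Fin 11)) - θ (σ (((0:ℕ)) : Fin 11))) := by
    have hc11 : (((11:ℕ)) : Fin 11) = (((0:ℕ)) : Fin 11) := by
      apply Fin.ext
      rw [Fin.val_natCast, Fin.val_natCast]
    have h10 := hedge' 10 (le_refl 10)
    rw [show (10 + 1 : ℕ) = 11 from rfl, hc11] at h10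
    have hle : (((0:ℕ)) : Fin 11) ≤ (((10:ℕ)) : Fin 11) := by
      rw [Fin.le_def, Fin.val_natCast, Fin.val_natCast]
      omega
    have ht0 : 0 ≤ θ (σ (((10:ℕ)) : Fin 11)) - θ (σ (((0:ℕ)) : Fin 11)) :=
      sub_nonneg.2 (hmono hle)
    have ht2 : θ (σ (((10:ℕ)) : Fin 11)) - θ (σ (((0:ℕ)) : Fin 11)) < 2*Real.pi := by
      have := hθub (σ (((10:ℕ)) : Fin 11))
      have := hθlb (σ (((0:ℕ)) : Fin 11))
      linarith
    have hcos : Real.cos (θ (σ (((10:ℕ)) : Fin 11)) - θ (σ (((0:ℕ)) : Fin 11)))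
        ≤ Real.cos (W 10) := by
      rw [← Real.cos_neg, neg_sub]
      exact h10
    have := (gap_lemma (hWrange 10).2 ht0 ht2 hcos).2
    linarith
  -- telescoping upper bound
  set Θ : ℕ → ℝ := fun n => θ (σ ((n : Fin 11))) with hΘ
  have htel : ∑ k ∈ Finset.range 10, (Θ (k+1) - Θ k) = Θ 10 - Θ 0 :=
    Finset.sum_range_sub Θ 10
  have hsum_le : ∑ k ∈ Finset.range 11, W k ≤ 2*Real.pi := by
    rw [Finset.sum_range_succ]
    have h1 : ∑ k ∈ Finset.range 10, W k ≤ ∑ k ∈ Finset.range 10, (Θ (k+1) - Θ k) := by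
      apply Finset.sum_le_sum
      intro k hk
      exact hgap k (Finset.mem_range.1 hk)
    rw [htel] at h1
    have h2 := hwrap
    simp only [hΘ] at h1 ⊢
    push_cast at h1 h2 ⊢
    linarith
  -- counting lower bound
  have hsplit := Finset.sum_filter_add_sum_filter_not (Finset.range 11)
    (fun (k : ℕ) => σ ((k : Fin 11)) ∈ S ∧ σ (((k+1:ℕ)) : Fin 11) ∈ S) W
  set T := (Finset.range 11).filter
    (fun (k : ℕ) => σ ((k : Fin 11)) ∈ S ∧ σ (((k+1:ℕ)) : Fin 11) ∈ S) with hT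
  set Tc := (Finset.range 11).filter
    (fun (k : ℕ) => ¬(σ ((k : Fin 11)) ∈ S ∧ σ (((k+1:ℕ)) : Fin 11) ∈ S)) with hTc
  have hTsum : ∑ k ∈ T, W k = (T.card : ℝ) * 0.5865 := by
    rw [Finset.sum_congr rfl (fun k hk => ?_), Finset.sum_const, nsmul_eq_mul]
    exact if_pos (Finset.mem_filter.1 hk).2
  have hTcsum : ∑ k ∈ Tc, W k = (Tc.card : ℝ) * 0.5501 := by
    rw [Finset.sum_congr rfl (fun k hk => ?_), Finset.sum_const, nsmul_eq_mul]
    exact if_neg (Finset.mem_filter.1 hk).2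
  have hcards : T.card + Tc.card = 11 := by
    rw [hT, hTc]
    rw [Finset.card_filter_add_card_filter_not]
    exact Finset.card_range 11
  have hScard : S.card ≤ 11 := by
    have := Finset.card_le_univ S
    simpa using this
  have hTcsub : Tc ⊆ ((Finset.range 11).filter (fun (k : ℕ) => σ ((k : Fin 11)) ∉ S))
      ∪ ((Finset.range 11).filter (fun (k : ℕ) => σ (((k+1:ℕ)) : Fin 11) ∉ S)) := by
    intro k hk
    rw [hTc, Finset.mem_filter] at hk
    rw [Finset.mem_union, Finset.mem_filter, Finset.mem_filter]
    tauto
  have hTccard : Tc.card ≤ 4 := by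
    have h1 := Finset.card_le_card hTcsub
    have h2 := Finset.card_union_le
      ((Finset.range 11).filter (fun (k : ℕ) => σ ((k : Fin 11)) ∉ S))
      ((Finset.range 11).filter (fun (k : ℕ) => σ (((k+1:ℕ)) : Fin 11) ∉ S))
    rw [cardA σ S, cardB σ S] at h2
    omega
  have hTcard : 7 ≤ T.card := by omega
  have hsum_ge : (6.3059 : ℝ) ≤ ∑ k ∈ Finset.range 11, W k := by
    rw [← hsplit, hTsum, hTcsum]
    have h7 : (7 : ℝ) ≤ (T.card : ℝ) := by exact_mod_cast hTcard
    have h11 : (T.card : ℝ) + (Tc.card : ℝ) = 11 := by exact_mod_cast hcards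
    nlinarith
  linarith
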